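/- Let n ≥ 1, let p1, p2 : Fin n → ℕ be positive processing times, and suppose σ is a feasible sequence with p1(σ 0) ≠ p2(σ (n−1)). Then every feasible sequence τ satisfies p1(τ 0) = p1(σ 0) and p2(τ (n−1)) = p2(σ (n−1)); consequently all feasible sequences have the same makespan p1(σ 0) + Σ_i p2(i). -/

import Mathlib

/-- A sequence `σ` for a two-machine no-idle/no-wait flow shop instance is feasible
if `p2 (σ j) = p1 (σ (j+1))` for every position `j` with `j+1 < n`. -/
def FeasibleSeq (n : ℕ) (p1 p2 : Fin n → ℕ) (σ : Fin n ≃ Fin n) : Prop :=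
  ∀ j : Fin n, ∀ h : (j : ℕ) + 1 < n, p2 (σ j) = p1 (σ ⟨(j : ℕ) + 1, h⟩)

/-- Counting lemma: for any feasible sequence `τ` and any value `v`, the difference
between the number of jobs with `p1 = v` and those with `p2 = v` equals the boundary
contribution of the first and last positions. -/
lemma feasible_count (n : ℕ) (hn : 1 ≤ n) (p1 p2 : Fin n → ℕ)
    (τ : Fin n ≃ Fin n) (hτ : FeasibleSeq n p1 p2 τ) (v : ℕ) :
    (∑ i, (if p1 i = v then (1:ℤ) else 0)) - (∑ i, (if p2 i = v then (1:ℤ) else 0))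
      = (if p1 (τ ⟨0, Nat.lt_of_lt_of_le Nat.zero_lt_one hn⟩) = v then 1 else 0)
        - (if p2 (τ ⟨n - 1, Nat.sub_lt hn Nat.one_pos⟩) = v then 1 else 0) := by
  set A : ℕ → ℤ := fun j => if h : j < n then (if p1 (τ ⟨j, h⟩) = v then 1 else 0) else 0
    with hA
  set B : ℕ → ℤ := fun j => if h : j < n then (if p2 (τ ⟨j, h⟩) = v then 1 else 0) else 0
    with hB
  have h1 : (∑ i, (if p1 i = v then (1:ℤ) else 0)) = ∑ j ∈ Finset.range n, A j := by
    rw [← Equiv.sum_comp τ (fun i => if p1 i = v then (1:ℤ) else 0),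
      ← Fin.sum_univ_eq_sum_range]
    refine Finset.sum_congr rfl fun i _ => ?_
    simp [hA, i.isLt]
  have h2 : (∑ i, (if p2 i = v then (1:ℤ) else 0)) = ∑ j ∈ Finset.range n, B j := by
    rw [← Equiv.sum_comp τ (fun i => if p2 i = v then (1:ℤ) else 0),
      ← Fin.sum_univ_eq_sum_range]
    refine Finset.sum_congr rfl fun i _ => ?_
    simp [hB, i.isLt]
  have hn' : n - 1 + 1 = n := by omega
  have hsA : ∑ j ∈ Finset.range n, A j
      = (∑ j ∈ Finset.range (n - 1), A (j + 1)) + A 0 := by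
    rw [← hn', Finset.sum_range_succ']
    simp
  have hsB : ∑ j ∈ Finset.range n, B j
      = (∑ j ∈ Finset.range (n - 1), B j) + B (n - 1) := by
    rw [← hn', Finset.sum_range_succ]
    simp
  have hAB : ∀ j ∈ Finset.range (n - 1), A (j + 1) = B j := by
    intro j hj
    rw [Finset.mem_range] at hj
    have hj1 : j + 1 < n := by omega
    have hj2 : j < n := by omega
    simp only [hA, hB, dif_pos hj1, dif_pos hj2]
    rw [← hτ ⟨j, hj2⟩ hj1]
  have hA0 : A 0 = (if p1 (τ ⟨0, by omega⟩) = v then (1:ℤ) else 0) := by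
    have h0 : (0:ℕ) < n := by omega
    simp only [hA, dif_pos h0]
  have hBl : B (n - 1) = (if p2 (τ ⟨n - 1, by omega⟩) = v then (1:ℤ) else 0) := by
    have hl : n - 1 < n := by omega
    simp only [hB, dif_pos hl]
  rw [h1, h2, hsA, hsB, Finset.sum_congr rfl hAB, hA0, hBl]
  ring

set_option maxHeartbeats 1000000 in
/-- if some feasible sequence `σ` has `p1 (σ 0) ≠ p2 (σ (n-1))`, then
every feasible sequence `τ` has the same first processing time on M1, the same last
processing time on M2, and hence the same makespan `p1 (σ 0) + Σ_i p2 i`. -/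
theorem stmt_4 (n : ℕ) (hn : 1 ≤ n) (p1 p2 : Fin n → ℕ)
    (hp1 : ∀ i, 0 < p1 i) (hp2 : ∀ i, 0 < p2 i)
    (σ : Fin n ≃ Fin n) (hσ : FeasibleSeq n p1 p2 σ)
    (hne : p1 (σ ⟨0, by omega⟩) ≠ p2 (σ ⟨n - 1, by omega⟩)) :
    ∀ τ : Fin n ≃ Fin n, FeasibleSeq n p1 p2 τ →
      p1 (τ ⟨0, by omega⟩) = p1 (σ ⟨0, by omega⟩) ∧
      p2 (τ ⟨n - 1, by omega⟩) = p2 (σ ⟨n - 1, by omega⟩) ∧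
      p1 (τ ⟨0, by omega⟩) + ∑ i, p2 i = p1 (σ ⟨0, by omega⟩) + ∑ i, p2 i := by
  intro τ hτ
  have e1 := feasible_count n hn p1 p2 σ hσ (p1 (σ ⟨0, by omega⟩))
  have e2 := feasible_count n hn p1 p2 σ hσ (p2 (σ ⟨n - 1, by omega⟩))
  have f1 := feasible_count n hn p1 p2 τ hτ (p1 (σ ⟨0, by omega⟩))
  have f2 := feasible_count n hn p1 p2 τ hτ (p2 (σ ⟨n - 1, by omega⟩))
  have h0 : 0 < n := by omega
  have hl : n - 1 < n := by omega
  have g1 : (if p1 (σ ⟨0, h0⟩) = p1 (σ ⟨0, h0⟩) then (1:ℤ) else 0)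
      - (if p2 (σ ⟨n - 1, hl⟩) = p1 (σ ⟨0, h0⟩) then 1 else 0)
      = (if p1 (τ ⟨0, h0⟩) = p1 (σ ⟨0, h0⟩) then 1 else 0)
      - (if p2 (τ ⟨n - 1, hl⟩) = p1 (σ ⟨0, h0⟩) then 1 else 0) := e1.symm.trans f1
  have g2 : (if p1 (σ ⟨0, h0⟩) = p2 (σ ⟨n - 1, hl⟩) then (1:ℤ) else 0)
      - (if p2 (σ ⟨n - 1, hl⟩) = p2 (σ ⟨n - 1, hl⟩) then 1 else 0)
      = (if p1 (τ ⟨0, h0⟩) = p2 (σ ⟨n - 1, hl⟩) then 1 else 0)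
      - (if p2 (τ ⟨n - 1, hl⟩) = p2 (σ ⟨n - 1, hl⟩) then 1 else 0) := e2.symm.trans f2
  have hne' : p2 (σ ⟨n - 1, hl⟩) ≠ p1 (σ ⟨0, h0⟩) := fun h => hne h.symm
  have hne'' : p1 (σ ⟨0, h0⟩) ≠ p2 (σ ⟨n - 1, hl⟩) := fun h => hne h
  rw [if_pos rfl, if_neg hne'] at g1
  rw [if_pos rfl, if_neg hne''] at g2
  have hfirst : p1 (τ ⟨0, h0⟩) = p1 (σ ⟨0, h0⟩) := by
    split_ifs at g1 with hC hD <;> first | assumption | omega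
  have hlast : p2 (τ ⟨n - 1, hl⟩) = p2 (σ ⟨n - 1, hl⟩) := by
    split_ifs at g2 with hC hD <;> first | assumption | omega
  exact ⟨hfirst, hlast, congrArg (fun x => x + ∑ i, p2 i) hfirst⟩
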